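/- Let (P, ≤) be a partial order and κ a cardinal. If P is strongly <κ-distributive, then for every p ∈ P and every sequence (A_α)_{α<κ} of maximal antichains below p such that A_α refines A_β whenever β < α < κ, there exists a descending sequence (p_α)_{α<κ} with p_0 ≤ p and p_α ∈ A_α for every α < κ. -/

import Mathlib

universe u v

/-- `D` is open (downward closed) and dense in the partial order `P`. -/
def OpenDense {P : Type u} [Preorder P] (D : Set P) : Prop :=
  (∀ p ∈ D, ∀ q, q ≤ p → q ∈ D) ∧ ∀ p : P, ∃ q, q ≤ p ∧ q ∈ D

/-- `P` is strongly `<κ`-distributive: for every `κ`-sequence of open dense sets and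
every `p` there is a descending sequence (a thread) below `p` meeting them in order. -/
def StronglyDistrib (κ : Cardinal.{v}) (P : Type u) [Preorder P] : Prop :=
  ∀ D : Ordinal.{v} → Set P, (∀ α < κ.ord, OpenDense (D α)) → ∀ p : P,
    ∃ f : Ordinal.{v} → P, f 0 ≤ p ∧
      (∀ β α, β ≤ α → α < κ.ord → f α ≤ f β) ∧
      ∀ α < κ.ord, f α ∈ D α

/-- `P` is `<κ`-distributive: intersections of fewer than `κ` open dense sets are dense. -/
def DistribLt (κ : Cardinal.{v}) (P : Type u) [Preorder P] : Prop :=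
  ∀ γ < κ.ord, ∀ D : Ordinal.{v} → Set P, (∀ α < γ, OpenDense (D α)) →
    ∀ p : P, ∃ q, q ≤ p ∧ ∀ α < γ, q ∈ D α

/-- Two conditions are compatible if they have a common lower bound. -/
def Compat {P : Type u} [Preorder P] (p q : P) : Prop := ∃ r, r ≤ p ∧ r ≤ q

/-- An antichain: a set of pairwise incompatible conditions. -/
def IsAntichainIncompat {P : Type u} [Preorder P] (A : Set P) : Prop :=
  ∀ p ∈ A, ∀ q ∈ A, p ≠ q → ¬Compat p q

/-- `A` is a maximal antichain below `p`. -/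
def MaxAntichainBelow {P : Type u} [Preorder P] (p : P) (A : Set P) : Prop :=
  IsAntichainIncompat A ∧ (∀ a ∈ A, a ≤ p) ∧ ∀ q, q ≤ p → ∃ a ∈ A, Compat q a

/-- `A` refines `B`: every element of `A` lies below an element of `B`. -/
def Refines {P : Type u} [Preorder P] (A B : Set P) : Prop :=
  ∀ a ∈ A, ∃ b ∈ B, a ≤ b

/-- If `P` is strongly `<κ`-distributive, then every refining `κ`-sequence of maximal
antichains below `p` admits a descending sequence selecting one element from each. -/
theorem thread_through_antichains {P : Type u} [PartialOrder P] (κ : Cardinal.{v})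
    (h : StronglyDistrib κ P) (p : P) (A : Ordinal.{v} → Set P)
    (hmax : ∀ α < κ.ord, MaxAntichainBelow p (A α))
    (href : ∀ β α, β < α → α < κ.ord → Refines (A α) (A β)) :
    ∃ f : Ordinal.{v} → P, f 0 ≤ p ∧
      (∀ β α, β ≤ α → α < κ.ord → f α ≤ f β) ∧
      ∀ α < κ.ord, f α ∈ A α := by
  classical
  set D : Ordinal.{v} → Set P := fun α => {q | (∃ a ∈ A α, q ≤ a) ∨ ¬Compat q p} with hD
  have hod : ∀ α < κ.ord, OpenDense (D α) := by
    intro α hα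
    constructor
    · rintro q (⟨a, ha, hqa⟩ | hq) r hr
      · exact Or.inl ⟨a, ha, le_trans hr hqa⟩
      · exact Or.inr fun ⟨s, hs1, hs2⟩ => hq ⟨s, le_trans hs1 hr, hs2⟩
    · intro r
      by_cases hc : Compat r p
      · obtain ⟨s, hsr, hsp⟩ := hc
        obtain ⟨a, ha, t, ht1, ht2⟩ := (hmax α hα).2.2 s hsp
        exact ⟨t, le_trans ht1 hsr, Or.inl ⟨a, ha, ht2⟩⟩
      · exact ⟨r, le_refl r, Or.inr hc⟩
  obtain ⟨f, hf0, hfd, hfD⟩ := h D hod p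
  have hfp : ∀ α < κ.ord, f α ≤ p := fun α hα =>
    le_trans (hfd 0 α zero_le hα) hf0
  have key : ∀ α < κ.ord, ∃ a ∈ A α, f α ≤ a := by
    intro α hα
    rcases hfD α hα with (⟨a, ha, hfa⟩ | hnc)
    · exact ⟨a, ha, hfa⟩
    · exact absurd ⟨f α, le_refl _, hfp α hα⟩ hnc
  choose a haA hfa using key
  refine ⟨fun α => if hα : α < κ.ord then a α hα else f α, ?_, ?_, ?_⟩
  · by_cases h0 : (0 : Ordinal.{v}) < κ.ord
    · simp only [dif_pos h0]
      exact (hmax 0 h0).2.1 _ (haA 0 h0)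
    · simp only [dif_neg h0]; exact hf0
  · intro β α hβα hα
    have hβ : β < κ.ord := lt_of_le_of_lt hβα hα
    simp only [dif_pos hα, dif_pos hβ]
    rcases eq_or_lt_of_le hβα with rfl | hlt
    · exact le_refl _
    · obtain ⟨b, hb, hab⟩ := href β α hlt hα _ (haA α hα)
      have hcompat : Compat b (a β hβ) :=
        ⟨f α, le_trans (hfa α hα) hab, le_trans (hfd β α hβα hα) (hfa β hβ)⟩
      by_cases hbe : b = a β hβ
      · exact hbe ▸ hab
      · exact absurd hcompat ((hmax β hβ).1 b hb (a β hβ) (haA β hβ) hbe)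
  · intro α hα
    simp only [dif_pos hα]
    exact haA α hα
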